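/- Let n ≥ 1 and let S ⊆ {1, …, ⌊n/2⌋} be a jump set, viewed inside Z_n. Then every edge {a, b} of the subgraph of Circ(n, S) induced by the open neighbourhood of the vertex 0 has a unique canonical representation: there exist unique x ∈ S ∪ (−S) and y ∈ S with {a, b} = {x, x + y}, subject to the additional requirement that x ∈ S whenever y = −y in Z_n. -/

import Mathlib

/-- The circulant graph `Circ(n, S)`: vertices are `ZMod n`, and distinct
vertices `x, y` are adjacent iff `x - y ∈ S ∪ (-S)`. -/
def Circulant (n : ℕ) (S : Set (ZMod n)) : SimpleGraph (ZMod n) where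
  Adj x y := x ≠ y ∧ x - y ∈ S ∪ -S
  symm := by
    constructor
    rintro x y ⟨hxy, h⟩
    refine ⟨hxy.symm, ?_⟩
    have hyx : y - x = -(x - y) := by ring
    rw [hyx]
    rcases h with h | h
    · exact Or.inr (Set.neg_mem_neg.mpr h)
    · exact Or.inl (Set.mem_neg.mp h)
  loopless := ⟨fun x h => h.1 rfl⟩

/-- Every edge `{a, b}` of the subgraph of `Circ(n, S)` induced by the open
neighbourhood `S ∪ (-S)` of the vertex `0` has a unique canonical
representation `{x, x + y}` with `x ∈ S ∪ (-S)`, `y ∈ S`, and `x ∈ S`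
whenever `y` is an involution (`y = -y`). -/
theorem unique_canonical_representation (n : ℕ) (hn : 1 ≤ n) (S : Set (ZMod n))
    (hS : ∀ s ∈ S, 1 ≤ s.val ∧ s.val ≤ n / 2)
    (a b : ZMod n) (ha : a ∈ S ∪ -S) (hb : b ∈ S ∪ -S)
    (hadj : (Circulant n S).Adj a b) :
    ∃! p : ZMod n × ZMod n,
      p.1 ∈ S ∪ -S ∧ p.2 ∈ S ∧ s(a, b) = s(p.1, p.1 + p.2) ∧
        (p.2 = -p.2 → p.1 ∈ S) := by
  haveI : NeZero n := ⟨by omega⟩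
  obtain ⟨hab, hd⟩ := hadj
  have hne : ∀ s ∈ S, s ≠ 0 := by
    intro s hs h
    have h1 := (hS s hs).1
    rw [h, ZMod.val_zero] at h1
    omega
  have hnegval : ∀ s : ZMod n, s ≠ 0 → (-s).val = n - s.val := by
    intro s hs
    rw [ZMod.neg_val, if_neg hs]
  -- if both x and -x lie in S, then x = -x
  have hboth : ∀ x : ZMod n, x ∈ S → -x ∈ S → x = -x := by
    intro x h1 h2
    have hx0 : x ≠ 0 := hne x h1
    have e1 := hS x h1
    have e2 := hS (-x) h2
    have e3 := hnegval x hx0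
    have hv : x.val = (-x).val := by omega
    exact ZMod.val_injective n hv
  -- adding an involution of S to an element of S leaves S
  have key : ∀ x u : ZMod n, x ∈ S → x = -x → u ∈ S → u + x ∉ S := by
    intro x u hx hinv hu hux
    have hx0 : x ≠ 0 := hne x hx
    have e3 : (-x).val = n - x.val := hnegval x hx0
    have e4 : x.val = (-x).val := congrArg ZMod.val hinv
    have e1 := hS x hx
    have e2 := hS u hu
    have e5 := hS _ hux
    have hadd : (u + x).val = (u.val + x.val) % n := ZMod.val_add u x
    have hle : u.val + x.val ≤ n := by omega
    rcases lt_or_eq_of_le hle with h | h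
    · rw [Nat.mod_eq_of_lt h] at hadd; omega
    · rw [h, Nat.mod_self] at hadd; omega
  have hd0 : b - a ≠ 0 := sub_ne_zero.mpr (fun h => hab h.symm)
  have hdor : b - a ∈ S ∨ -(b - a) ∈ S := by
    rcases hd with h | h
    · right
      rwa [show -(b - a) = a - b by ring]
    · left
      rw [Set.mem_neg] at h
      rwa [show b - a = -(a - b) by ring]
  have contra : b - a ∈ S → b - a = -(b - a) → a ∈ S → b ∈ S → False := by
    intro h1 h2 h3 h4
    exact key _ _ h1 h2 h3 (by rwa [show a + (b - a) = b by ring])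
  have classify : ∀ x y : ZMod n, s(a, b) = s(x, x + y) →
      (x = a ∧ y = b - a) ∨ (x = b ∧ y = a - b) := by
    intro x y h
    rw [Sym2.eq_iff] at h
    rcases h with ⟨h1, h2⟩ | ⟨h1, h2⟩
    · subst h1; left
      exact ⟨rfl, by rw [h2]; ring⟩
    · subst h2; right
      exact ⟨rfl, by rw [h1]; ring⟩
  have hsymab : s(a, b) = s(b, b + (a - b)) := by
    rw [show b + (a - b) = a by ring]
    exact Sym2.eq_swap
  by_cases hdS : b - a ∈ S
  · by_cases haS : a ∈ S
    · -- canonical pair (a, b - a)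
      refine ⟨(a, b - a), ⟨ha, hdS, by rw [show a + (b - a) = b by ring], fun _ => haS⟩, ?_⟩
      rintro ⟨x, y⟩ ⟨hx, hy, heq, hcond⟩
      rcases classify x y heq with ⟨h1, h2⟩ | ⟨h1, h2⟩
      · rw [h1, h2]
      · -- x = b, y = a - b ∈ S
        exfalso
        have hmd : -(b - a) ∈ S := by rwa [show -(b - a) = a - b by ring, ← h2]
        have hinv : b - a = -(b - a) := hboth _ hdS hmd
        have hyinv : y = -y := by
          rw [h2]; linear_combination -hinv
        have hbS : b ∈ S := h1 ▸ hcond hyinv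
        exact contra hdS hinv haS hbS
    · by_cases hinv : b - a = -(b - a)
      · -- canonical pair (b, a - b); here a ∉ S, so b ∈ S
        have haS' : -a ∈ S := by
          rcases ha with h | h
          · exact absurd h haS
          · rwa [Set.mem_neg] at h
        have hbS : b ∈ S := by
          rcases hb with h | h
          · exact h
          · exfalso
            rw [Set.mem_neg] at h
            have := key _ _ hdS hinv h
            exact this (by rwa [show -b + (b - a) = -a by ring])
        have heq2 : a - b = b - a := by
          rw [show a - b = -(b - a) by ring, ← hinv]
        refine ⟨(b, a - b), ⟨hb, by rwa [heq2], hsymab, fun _ => hbS⟩, ?_⟩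
        rintro ⟨x, y⟩ ⟨hx, hy, heq, hcond⟩
        rcases classify x y heq with ⟨h1, h2⟩ | ⟨h1, h2⟩
        · -- x = a, y = b - a : cond forces a ∈ S, contradiction
          exfalso
          have hyinv : y = -y := by rw [h2]; exact hinv
          exact haS (h1 ▸ hcond hyinv)
        · rw [h1, h2]
      · -- canonical pair (a, b - a); involution condition vacuous
        refine ⟨(a, b - a), ⟨ha, hdS, by rw [show a + (b - a) = b by ring],
          fun h => absurd h hinv⟩, ?_⟩
        rintro ⟨x, y⟩ ⟨hx, hy, heq, hcond⟩
        rcases classify x y heq with ⟨h1, h2⟩ | ⟨h1, h2⟩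
        · rw [h1, h2]
        · exfalso
          have hmd : -(b - a) ∈ S := by rwa [show -(b - a) = a - b by ring, ← h2]
          exact hinv (hboth _ hdS hmd)
  · -- b - a ∉ S, so a - b ∈ S; canonical pair (b, a - b)
    have hmd : a - b ∈ S := by
      rcases hdor with h | h
      · exact absurd h hdS
      · rwa [show -(b - a) = a - b by ring] at h
    refine ⟨(b, a - b), ⟨hb, hmd, hsymab, ?_⟩, ?_⟩
    · intro h
      exfalso
      apply hdS
      rwa [show b - a = -(a - b) by ring, ← h]
    · rintro ⟨x, y⟩ ⟨hx, hy, heq, hcond⟩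
      rcases classify x y heq with ⟨h1, h2⟩ | ⟨h1, h2⟩
      · exact absurd (h2 ▸ hy) hdS
      · rw [h1, h2]
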